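/- Derivative of the pressure in the direction of a Hölder potential: Let 0<α<1 and let f,φ:Ω→ℝ be α-Hölder. Suppose λ_f>0, a strictly positive continuous function h_f with ∫_Ω h_f dν_f = 1, and a Borel probability measure ν_f satisfy L_f h_f = λ_f h_f, ∫_Ω (L_f ψ) dν_f = λ_f ∫_Ω ψ dν_f for every continuous ψ, and ‖λ_f^{-n} L_f^n ψ − h_f ∫_Ω ψ dν_f‖₀ → 0 for every continuous ψ. For each real t let P(f+tφ) be the real number (which exists) such that ‖(1/n) log(L_{f+tφ}^n 𝟙) − P(f+tφ)‖₀ → 0. Then the map t ↦ P(f+tφ) is differentiable at t=0 and its derivative equals ∫_Ω φ·h_f dν_f. -/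

import Mathlib

open MeasureTheory Filter Topology

noncomputable def dOmega {M : Type*} [MetricSpace M] (x y : ℕ → M) : ℝ :=
  ∑' n : ℕ, (1 / 2 : ℝ) ^ (n + 1) * dist (x n) (y n)

/-- The sequence `(a, x₁, x₂, …)` obtained by prepending `a` to `x`. -/
def consSeq {M : Type*} (a : M) (x : ℕ → M) : ℕ → M := fun n => Nat.casesOn n a x

/-- The left shift `σ(x₁,x₂,…) = (x₂,x₃,…)`. -/
def shift {M : Type*} (x : ℕ → M) : ℕ → M := fun n => x (n + 1)

/-- The Ruelle transfer operator with a priori measure `μ` and potential `f`. -/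
noncomputable def Ruelle {M : Type*} [MeasurableSpace M] (μ : Measure M)
    (f φ : (ℕ → M) → ℝ) : (ℕ → M) → ℝ :=
  fun x => ∫ a, Real.exp (f (consSeq a x)) * φ (consSeq a x) ∂μ

/-- The `n`-th Birkhoff sum `S_n φ = Σ_{j=0}^{n-1} φ ∘ σ^j`. -/
noncomputable def birkhoff {M : Type*} (φ : (ℕ → M) → ℝ) (n : ℕ) : (ℕ → M) → ℝ :=
  fun x => ∑ j ∈ Finset.range n, φ (shift^[j] x)

/-- `f` is `α`-Hölder with respect to the metric `dOmega`. -/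
def IsHolder {M : Type*} [MetricSpace M] (α : ℝ) (f : (ℕ → M) → ℝ) : Prop :=
  ∃ C : ℝ, 0 ≤ C ∧ ∀ x y, |f x - f y| ≤ C * dOmega x y ^ α


set_option linter.unusedSectionVars false

section Aux

lemma shift_consSeq {M : Type*} (a : M) (x : ℕ → M) : shift (consSeq a x) = x := rfl

variable {M : Type*} [MetricSpace M] [CompactSpace M]

lemma continuous_consSeq_right (a : M) : Continuous (fun x : ℕ → M => consSeq a x) := by
  refine continuous_pi fun n => ?_
  cases n with
  | zero => exact continuous_const
  | succ n => exact continuous_apply n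

lemma continuous_consSeq_left (x : ℕ → M) : Continuous (fun a : M => consSeq a x) := by
  refine continuous_pi fun n => ?_
  cases n with
  | zero => exact continuous_id
  | succ n => exact continuous_const

lemma continuous_shift : Continuous (shift : (ℕ → M) → (ℕ → M)) :=
  continuous_pi fun n => continuous_apply (n+1)

lemma continuous_shift_iter (n : ℕ) : Continuous ((shift : (ℕ → M) → (ℕ → M))^[n]) :=
  Continuous.iterate continuous_shift n

lemma continuous_birkhoff {φ : (ℕ → M) → ℝ} (hφ : Continuous φ) (n : ℕ) :
    Continuous (birkhoff φ n) := by
  unfold birkhoff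
  exact continuous_finset_sum _ fun j _ => hφ.comp (continuous_shift_iter j)

/-- A continuous real function on a compact space is bounded. -/
lemma exists_abs_bound {X : Type*} [TopologicalSpace X] [CompactSpace X] {f : X → ℝ}
    (hf : Continuous f) : ∃ K : ℝ, 0 ≤ K ∧ ∀ x, |f x| ≤ K := by
  rcases isEmpty_or_nonempty X with hE | hNE
  · exact ⟨0, le_refl 0, fun x => (IsEmpty.false x).elim⟩
  · obtain ⟨z, hz⟩ := hf.abs.exists_forall_ge (by simp [Filter.cocompact_eq_bot])
    exact ⟨|f z|, abs_nonneg _, hz⟩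

variable [MeasurableSpace M] [BorelSpace M] (μ : Measure M) [IsProbabilityMeasure μ]

lemma integrable_integrand {p ψ : (ℕ → M) → ℝ} (hp : Continuous p) (hψ : Continuous ψ)
    (x : ℕ → M) :
    Integrable (fun a => Real.exp (p (consSeq a x)) * ψ (consSeq a x)) μ := by
  have hc : Continuous fun a : M => Real.exp (p (consSeq a x)) * ψ (consSeq a x) := by
    have hcs := continuous_consSeq_left (M := M) x
    exact ((hp.comp hcs).rexp).mul (hψ.comp hcs)
  obtain ⟨K, -, hK⟩ := exists_abs_bound hc
  exact (integrable_const K).mono' hc.aestronglyMeasurable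
    (Filter.Eventually.of_forall fun a => by rw [Real.norm_eq_abs]; exact hK a)

lemma ruelle_cont {p ψ : (ℕ → M) → ℝ} (hp : Continuous p) (hψ : Continuous ψ) :
    Continuous (Ruelle μ p ψ) := by
  obtain ⟨Kp, -, hKp⟩ := exists_abs_bound hp
  obtain ⟨Kψ, hKψ0, hKψ⟩ := exists_abs_bound hψ
  refine continuous_of_dominated (bound := fun _ => Real.exp Kp * Kψ)
    (fun x => (integrable_integrand μ hp hψ x).aestronglyMeasurable) ?_ (integrable_const _) ?_
  · intro x
    refine Filter.Eventually.of_forall fun a => ?_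
    have h1 : |Real.exp (p (consSeq a x))| ≤ Real.exp Kp := by
      rw [abs_of_pos (Real.exp_pos _)]
      exact Real.exp_le_exp.2 ((abs_le.1 (hKp _)).2)
    calc ‖Real.exp (p (consSeq a x)) * ψ (consSeq a x)‖
        = |Real.exp (p (consSeq a x))| * |ψ (consSeq a x)| := abs_mul _ _
      _ ≤ Real.exp Kp * Kψ := mul_le_mul h1 (hKψ _) (abs_nonneg _) (le_of_lt (Real.exp_pos _))
  · refine Filter.Eventually.of_forall fun a => ?_
    have hcs := continuous_consSeq_right (M := M) a
    exact ((hp.comp hcs).rexp).mul (hψ.comp hcs)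

lemma ruelle_mono {p ψ₁ ψ₂ : (ℕ → M) → ℝ} (hp : Continuous p) (hψ₁ : Continuous ψ₁)
    (hψ₂ : Continuous ψ₂) (hle : ∀ y, ψ₁ y ≤ ψ₂ y) (x : ℕ → M) :
    Ruelle μ p ψ₁ x ≤ Ruelle μ p ψ₂ x := by
  refine integral_mono (integrable_integrand μ hp hψ₁ x) (integrable_integrand μ hp hψ₂ x)
    fun a => ?_
  exact mul_le_mul_of_nonneg_left (hle _) (le_of_lt (Real.exp_pos _))

lemma ruelle_const_mul (p ψ : (ℕ → M) → ℝ) (r : ℝ) :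
    Ruelle μ p (fun y => r * ψ y) = fun x => r * Ruelle μ p ψ x := by
  funext x
  unfold Ruelle
  rw [← integral_const_mul]
  congr 1; funext a; ring

lemma ruelle_add {p ψ χ : (ℕ → M) → ℝ} (hp : Continuous p) (hψ : Continuous ψ)
    (hχ : Continuous χ) :
    Ruelle μ p (fun y => ψ y + χ y) = fun x => Ruelle μ p ψ x + Ruelle μ p χ x := by
  funext x
  unfold Ruelle
  rw [← integral_add (integrable_integrand μ hp hψ x) (integrable_integrand μ hp hχ x)]
  congr 1; funext a; ring

lemma ruelle_potential (p q ψ : (ℕ → M) → ℝ) :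
    Ruelle μ q ψ = Ruelle μ p (fun y => Real.exp (q y - p y) * ψ y) := by
  funext x
  unfold Ruelle
  congr 1; funext a
  show Real.exp (q (consSeq a x)) * ψ (consSeq a x)
      = Real.exp (p (consSeq a x)) * (Real.exp (q (consSeq a x) - p (consSeq a x)) * ψ (consSeq a x))
  rw [← mul_assoc, ← Real.exp_add]
  congr 2
  ring

lemma ruelle_shift_mul (p ψ χ : (ℕ → M) → ℝ) :
    Ruelle μ p (fun y => χ (shift y) * ψ y) = fun x => χ x * Ruelle μ p ψ x := by
  funext x
  unfold Ruelle
  rw [← integral_const_mul]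
  congr 1; funext a
  show Real.exp (p (consSeq a x)) * (χ (shift (consSeq a x)) * ψ (consSeq a x))
      = χ x * (Real.exp (p (consSeq a x)) * ψ (consSeq a x))
  rw [shift_consSeq]
  ring

lemma ruelle_const_lower {p ψ : (ℕ → M) → ℝ} (hp : Continuous p) (hψ : Continuous ψ)
    {β pmin : ℝ} (hβ : 0 ≤ β) (hψβ : ∀ y, β ≤ ψ y) (hpmin : ∀ y, pmin ≤ p y) (x : ℕ → M) :
    β * Real.exp pmin ≤ Ruelle μ p ψ x := by
  have h1 : ∫ (_ : M), β * Real.exp pmin ∂μ ≤ Ruelle μ p ψ x := by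
    refine integral_mono (integrable_const _) (integrable_integrand μ hp hψ x) fun a => ?_
    calc β * Real.exp pmin ≤ ψ (consSeq a x) * Real.exp (p (consSeq a x)) :=
          mul_le_mul (hψβ _) (Real.exp_le_exp.2 (hpmin _)) (le_of_lt (Real.exp_pos _)) (le_trans hβ (hψβ _))
      _ = Real.exp (p (consSeq a x)) * ψ (consSeq a x) := by ring
  simpa using h1

end Aux

section Iter

variable {M : Type*} [MetricSpace M] [CompactSpace M]
  [MeasurableSpace M] [BorelSpace M] (μ : Measure M) [IsProbabilityMeasure μ]

lemma iter_cont {p ψ : (ℕ → M) → ℝ} (hp : Continuous p) (hψ : Continuous ψ) (n : ℕ) :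
    Continuous ((Ruelle μ p)^[n] ψ) := by
  induction n with
  | zero => exact hψ
  | succ n ih =>
      rw [Function.iterate_succ_apply']
      exact ruelle_cont μ hp ih

lemma iter_mono {p ψ₁ ψ₂ : (ℕ → M) → ℝ} (hp : Continuous p) (hψ₁ : Continuous ψ₁)
    (hψ₂ : Continuous ψ₂) (hle : ∀ y, ψ₁ y ≤ ψ₂ y) (n : ℕ) (x : ℕ → M) :
    (Ruelle μ p)^[n] ψ₁ x ≤ (Ruelle μ p)^[n] ψ₂ x := by
  induction n generalizing ψ₁ ψ₂ with
  | zero => exact hle x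
  | succ n ih =>
      rw [Function.iterate_succ_apply, Function.iterate_succ_apply]
      exact ih (ruelle_cont μ hp hψ₁) (ruelle_cont μ hp hψ₂)
        (fun y => ruelle_mono μ hp hψ₁ hψ₂ hle y)

lemma iter_const_mul (p ψ : (ℕ → M) → ℝ) (r : ℝ) (n : ℕ) :
    (Ruelle μ p)^[n] (fun y => r * ψ y) = fun x => r * (Ruelle μ p)^[n] ψ x := by
  induction n generalizing ψ with
  | zero => rfl
  | succ n ih =>
      rw [Function.iterate_succ_apply, Function.iterate_succ_apply,
        ruelle_const_mul μ p ψ r, ih]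

lemma iter_add {p ψ χ : (ℕ → M) → ℝ} (hp : Continuous p) (hψ : Continuous ψ)
    (hχ : Continuous χ) (n : ℕ) :
    (Ruelle μ p)^[n] (fun y => ψ y + χ y)
      = fun x => (Ruelle μ p)^[n] ψ x + (Ruelle μ p)^[n] χ x := by
  induction n generalizing ψ χ with
  | zero => rfl
  | succ n ih =>
      rw [Function.iterate_succ_apply, Function.iterate_succ_apply,
        Function.iterate_succ_apply, ruelle_add μ hp hψ hχ,
        ih (ruelle_cont μ hp hψ) (ruelle_cont μ hp hχ)]

lemma iter_shift_mul (p ψ χ : (ℕ → M) → ℝ) (n : ℕ) :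
    (Ruelle μ p)^[n] (fun y => χ (shift^[n] y) * ψ y)
      = fun x => χ x * (Ruelle μ p)^[n] ψ x := by
  induction n generalizing ψ with
  | zero => rfl
  | succ n ih =>
      rw [Function.iterate_succ_apply]
      have e1 : (fun y => χ (shift^[n+1] y) * ψ y)
          = fun y => (fun z => χ (shift^[n] z)) (shift y) * ψ y := by
        funext y
        rw [Function.iterate_succ_apply]
      rw [e1, ruelle_shift_mul μ p ψ (fun z => χ (shift^[n] z))]
      rw [show (fun x => χ (shift^[n] x) * Ruelle μ p ψ x)
          = (fun y => χ (shift^[n] y) * (Ruelle μ p ψ) y) from rfl, ih]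
      funext x
      rw [← Function.iterate_succ_apply]

/-- Conjugation identity for iterates of the Ruelle operator. -/
lemma iter_conj (p ψ : (ℕ → M) → ℝ) (h : (ℕ → M) → ℝ) (hhpos : ∀ x, 0 < h x) (k : ℝ) (n : ℕ) :
    ((Ruelle μ (fun y => p y + Real.log (h y) - Real.log (h (shift y)) - k))^[n] ψ)
      = fun x => ((Real.exp k) ^ n * h x)⁻¹ * (Ruelle μ p)^[n] (fun y => h y * ψ y) x := by
  set q := fun y => p y + Real.log (h y) - Real.log (h (shift y)) - k with hq
  have step : ∀ χ : (ℕ → M) → ℝ, Ruelle μ q χ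
      = fun x => (Real.exp k * h x)⁻¹ * Ruelle μ p (fun y => h y * χ y) x := by
    intro χ
    rw [ruelle_potential μ p q χ]
    have e1 : (fun y => Real.exp (q y - p y) * χ y)
        = fun y => ((Real.exp k * h (shift y))⁻¹) * (h y * χ y) := by
      funext y
      have : q y - p y = Real.log (h y) - Real.log (h (shift y)) - k := by rw [hq]; ring
      rw [this, Real.exp_sub, Real.exp_sub, Real.exp_log (hhpos y), Real.exp_log (hhpos (shift y))]
      field_simp
    rw [e1]
    have e2 : (fun y => (Real.exp k * h (shift y))⁻¹ * (h y * χ y))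
        = fun y => (fun z => (Real.exp k * h z)⁻¹) (shift y) * ((fun z => h z * χ z) y) := rfl
    rw [e2, ruelle_shift_mul μ p _ (fun z => (Real.exp k * h z)⁻¹)]
  induction n generalizing ψ with
  | zero =>
      funext x
      simp only [Function.iterate_zero, id_eq, pow_zero, one_mul]
      rw [inv_mul_eq_div, mul_comm (h x) (ψ x), mul_div_assoc, div_self (hhpos x).ne', mul_one]
  | succ n ih =>
      rw [Function.iterate_succ_apply, Function.iterate_succ_apply, step ψ, ih]
      funext x
      have e3 : (fun y => h y * ((Real.exp k * h y)⁻¹ * Ruelle μ p (fun z => h z * ψ z) y))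
          = fun y => (Real.exp k)⁻¹ * (Ruelle μ p (fun z => h z * ψ z)) y := by
        funext y
        have h1 := (hhpos y).ne'
        field_simp
      rw [e3, iter_const_mul μ p _ _ n, ← Function.iterate_succ_apply]
      have h2 := (hhpos x).ne'
      have h3 := (Real.exp_pos k).ne'
      have h4 : Real.exp k ^ n ≠ 0 := pow_ne_zero _ h3
      rw [pow_succ]
      field_simp

end Iter


section HolderCont

lemma exp_upper {u B : ℝ} (h : |u| ≤ B) : Real.exp u ≤ 1 + u + u^2 * Real.exp B := by
  have hB : 0 ≤ B := le_trans (abs_nonneg u) h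
  have h1 : (1:ℝ) ≤ Real.exp B := by
    rw [← Real.exp_zero]; exact Real.exp_le_exp.2 hB
  rcases le_or_gt |u| 1 with hu | hu
  · have := Real.abs_exp_sub_one_sub_id_le hu
    have h2 := (abs_le.1 this).2
    nlinarith [sq_nonneg u]
  · rcases le_or_gt u 0 with hneg | hpos
    · have h3 : Real.exp u ≤ 1 := Real.exp_le_one_iff.2 hneg
      have h4 : u ≤ -1 := by
        rcases abs_cases u with ⟨h5, -⟩ | ⟨h5, -⟩ <;> linarith
      nlinarith [sq_nonneg u]
    · have h6 : 1 < u := by rwa [abs_of_pos hpos] at hu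
      have h7 : Real.exp u ≤ Real.exp B := Real.exp_le_exp.2 ((abs_le.1 h).2)
      have h9 : (1:ℝ) ≤ u^2 := by nlinarith
      have h8 : Real.exp B ≤ u^2 * Real.exp B := by nlinarith [Real.exp_pos B, h9]
      linarith

variable {M : Type*} [MetricSpace M] [CompactSpace M]

lemma dOmega_nonneg (x y : ℕ → M) : 0 ≤ dOmega x y :=
  tsum_nonneg fun n => mul_nonneg (by positivity) dist_nonneg

lemma summable_dOmega {D : ℝ} (hD : ∀ p q : M, dist p q ≤ D) (x y : ℕ → M) :
    Summable (fun n : ℕ => (1 / 2 : ℝ) ^ (n + 1) * dist (x n) (y n)) := by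
  refine Summable.of_nonneg_of_le (fun n => mul_nonneg (by positivity) dist_nonneg)
    (fun n => ?_) (summable_geometric_two.mul_right D)
  have : (1/2:ℝ)^(n+1) ≤ (1/2:ℝ)^n := by
    apply pow_le_pow_of_le_one (by norm_num) (by norm_num) (Nat.le_succ n)
  calc (1/2:ℝ)^(n+1) * dist (x n) (y n) ≤ (1/2:ℝ)^(n+1) * D :=
        mul_le_mul_of_nonneg_left (hD _ _) (by positivity)
    _ ≤ (1/2:ℝ)^n * D := by
        apply mul_le_mul_of_nonneg_right this
        exact le_trans dist_nonneg (hD (x 0) (y 0))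

set_option maxHeartbeats 2000000 in
lemma dOmega_le {D : ℝ} (hD : ∀ p q : M, dist p q ≤ D) {x y : ℕ → M} {N : ℕ} {δ : ℝ}
    (hδ0 : 0 ≤ δ) (hδ : ∀ n < N, dist (x n) (y n) ≤ δ) :
    dOmega x y ≤ δ + (1/2:ℝ)^N * D := by
  have hD0 : 0 ≤ D := le_trans dist_nonneg (hD (x 0) (y 0))
  have hsum := summable_dOmega hD x y
  have hsplit := Summable.sum_add_tsum_nat_add (f := fun n : ℕ => (1 / 2 : ℝ) ^ (n + 1) * dist (x n) (y n))
    N hsum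
  have hhead : ∑ n ∈ Finset.range N, (1 / 2 : ℝ) ^ (n + 1) * dist (x n) (y n) ≤ δ := by
    calc ∑ n ∈ Finset.range N, (1 / 2 : ℝ) ^ (n + 1) * dist (x n) (y n)
        ≤ ∑ n ∈ Finset.range N, (1 / 2 : ℝ) ^ (n + 1) * δ := by
          refine Finset.sum_le_sum fun n hn => ?_
          exact mul_le_mul_of_nonneg_left (hδ n (Finset.mem_range.1 hn)) (by positivity)
      _ = (∑ n ∈ Finset.range N, (1 / 2 : ℝ) ^ (n + 1)) * δ := by rw [Finset.sum_mul]
      _ ≤ 1 * δ := by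
          refine mul_le_mul_of_nonneg_right ?_ hδ0
          have h1 : ∀ n : ℕ, (1/2:ℝ)^(n+1) = 1/2/2^n := by
            intro n; rw [pow_succ, one_div, inv_pow]; ring
          have h2 : (∑' n : ℕ, (1:ℝ)/2/2^n) = 1 := tsum_geometric_two' 1
          calc ∑ n ∈ Finset.range N, (1 / 2 : ℝ) ^ (n + 1)
              = ∑ n ∈ Finset.range N, (1:ℝ)/2/2^n := by
                refine Finset.sum_congr rfl fun n _ => h1 n
            _ ≤ ∑' n : ℕ, (1:ℝ)/2/2^n :=
                Summable.sum_le_tsum _ (fun n _ => by positivity) (summable_geometric_two' 1)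
            _ = 1 := h2
      _ = δ := one_mul δ
  have htail : (∑' n : ℕ, (1 / 2 : ℝ) ^ (n + N + 1) * dist (x (n + N)) (y (n + N)))
      ≤ (1/2:ℝ)^N * D := by
    have hs2 : Summable (fun n : ℕ => (1 / 2 : ℝ) ^ (n + N + 1) * dist (x (n+N)) (y (n+N))) :=
      (summable_nat_add_iff N).2 hsum
    calc (∑' n : ℕ, (1 / 2 : ℝ) ^ (n + N + 1) * dist (x (n + N)) (y (n + N)))
        ≤ ∑' n : ℕ, ((1/2:ℝ)^N * D) * ((1:ℝ)/2/2^n) := by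
          refine Summable.tsum_le_tsum (fun n => ?_) hs2 ((summable_geometric_two' 1).mul_left _)
          have heq : (1/2:ℝ)^(n+N+1) = (1/2:ℝ)^N * ((1:ℝ)/2/2^n) := by
            rw [show n+N+1 = N + (n+1) by ring, pow_add, pow_succ, one_div, inv_pow]
            simp only [one_div, inv_pow]
            ring
          rw [heq]
          calc (1/2:ℝ)^N * ((1:ℝ)/2/2^n) * dist (x (n+N)) (y (n+N))
              ≤ (1/2:ℝ)^N * ((1:ℝ)/2/2^n) * D :=
                mul_le_mul_of_nonneg_left (hD _ _) (by positivity)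
            _ = (1/2:ℝ)^N * D * ((1:ℝ)/2/2^n) := by ring
      _ = (1/2:ℝ)^N * D := by
          rw [tsum_mul_left, tsum_geometric_two' 1, mul_one]
  show (∑' n : ℕ, (1 / 2 : ℝ) ^ (n + 1) * dist (x n) (y n)) ≤ δ + (1/2:ℝ)^N * D
  rw [← hsplit]
  exact add_le_add hhead htail

set_option maxHeartbeats 2000000 in
lemma IsHolder.continuous {α : ℝ} {f : (ℕ → M) → ℝ} (hα : 0 < α) (hf : IsHolder α f) :
    Continuous f := by
  obtain ⟨C, hC0, hC⟩ := hf
  obtain ⟨D, hD0, hD⟩ : ∃ D : ℝ, 0 ≤ D ∧ ∀ p q : M, dist p q ≤ D := by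
    obtain ⟨D, hD⟩ := Metric.isBounded_iff.1 (isCompact_univ : IsCompact (Set.univ : Set M)).isBounded
    exact ⟨max D 0, le_max_right _ _, fun p q => le_trans (hD trivial trivial) (le_max_left _ _)⟩
  rw [continuous_iff_continuousAt]
  intro x
  rw [ContinuousAt, Metric.tendsto_nhds]
  intro ε hε
  set ρ : ℝ := (ε / (2 * (C + 1))) ^ (α⁻¹) with hρ
  have hρpos : 0 < ρ := Real.rpow_pos_of_pos (by positivity) _
  have hkey : ∀ y : (ℕ → M), dOmega x y ≤ ρ → dist (f y) (f x) < ε := by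
    intro y hy
    have h1 : |f x - f y| ≤ C * dOmega x y ^ α := hC x y
    have h2 : dOmega x y ^ α ≤ ρ ^ α :=
      Real.rpow_le_rpow (dOmega_nonneg x y) hy (le_of_lt hα)
    have h3 : ρ ^ α = ε / (2 * (C + 1)) := by
      rw [hρ, Real.rpow_inv_rpow (by positivity) (ne_of_gt hα)]
    have h4 : C * dOmega x y ^ α ≤ C * (ε / (2 * (C + 1))) := by
      rw [← h3]
      exact mul_le_mul_of_nonneg_left h2 hC0
    have h5 : C * (ε / (2 * (C + 1))) < ε := by
      rw [mul_comm, div_mul_eq_mul_div, div_lt_iff₀ (by positivity)]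
      nlinarith
    rw [dist_eq_norm, Real.norm_eq_abs, abs_sub_comm]
    exact lt_of_le_of_lt (le_trans h1 h4) h5
  obtain ⟨N, hN⟩ : ∃ N : ℕ, (1/2:ℝ)^N * D < ρ/2 := by
    obtain ⟨N, hN⟩ := exists_pow_lt_of_lt_one (show (0:ℝ) < ρ/(2*(D+1)) by positivity)
      (show (1/2:ℝ) < 1 by norm_num)
    refine ⟨N, ?_⟩
    calc (1/2:ℝ)^N * D ≤ (ρ/(2*(D+1))) * D := by
          apply mul_le_mul_of_nonneg_right (le_of_lt hN) hD0
      _ < ρ/2 := by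
          rw [div_mul_eq_mul_div, div_lt_div_iff₀ (by positivity) (by norm_num)]
          nlinarith
  have hev : ∀ᶠ y in 𝓝 x, ∀ n ∈ Finset.range N, dist (x n) (y n) ≤ ρ/2 := by
    rw [Finset.eventually_all]
    intro n _
    have hc : Continuous fun y : ℕ → M => y n := continuous_apply n
    have := hc.continuousAt (x := x)
    have hball := this (Metric.ball_mem_nhds (x n) (show (0:ℝ) < ρ/2 by positivity))
    filter_upwards [hball] with y hy
    rw [Set.mem_preimage, Metric.mem_ball] at hy
    rw [dist_comm]
    exact le_of_lt hy
  filter_upwards [hev] with y hy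
  refine hkey y ?_
  have := dOmega_le hD (x := x) (y := y) (le_of_lt (show (0:ℝ) < ρ/2 by positivity))
    (fun n hn => hy n (Finset.mem_range.2 hn))
  linarith

end HolderCont

set_option maxHeartbeats 2000000 in
/-- Derivative of the pressure in the direction of a Hölder potential:
d/dt P(f+tφ) at t=0 equals ∫ φ h_f dν_f. -/
theorem pressure_derivative
    {M : Type*} [MetricSpace M] [CompactSpace M] [MeasurableSpace M] [BorelSpace M]
    (μ : Measure M) [IsProbabilityMeasure μ]
    (hfull : ∀ U : Set M, IsOpen U → U.Nonempty → 0 < μ U)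
    (α : ℝ) (hα0 : 0 < α) (hα1 : α < 1)
    (f φ : (ℕ → M) → ℝ) (hf : IsHolder α f) (hφ : IsHolder α φ)
    (lam : ℝ) (hlam : 0 < lam)
    (h : (ℕ → M) → ℝ) (hhc : Continuous h) (hhpos : ∀ x, 0 < h x)
    (ν : Measure (ℕ → M)) [IsProbabilityMeasure ν]
    (hnorm : ∫ x, h x ∂ν = 1)
    (heig : Ruelle μ f h = fun x => lam * h x)
    (heig' : ∀ ψ : (ℕ → M) → ℝ, Continuous ψ →
      ∫ x, Ruelle μ f ψ x ∂ν = lam * ∫ x, ψ x ∂ν)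
    (hconv : ∀ ψ : (ℕ → M) → ℝ, Continuous ψ →
      TendstoUniformly
        (fun (n : ℕ) (x : ℕ → M) => (lam ^ n)⁻¹ * (Ruelle μ f)^[n] ψ x)
        (fun x => h x * ∫ y, ψ y ∂ν) atTop)
    (P : ℝ → ℝ)
    (hP : ∀ t : ℝ, TendstoUniformly
      (fun (n : ℕ) (x : ℕ → M) =>
        (n : ℝ)⁻¹ * Real.log ((Ruelle μ (fun y => f y + t * φ y))^[n] 1 x))
      (fun _ => P t) atTop) :
    HasDerivAt P (∫ x, φ x * h x ∂ν) 0 := by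
  classical
  have hfc : Continuous f := hf.continuous hα0
  have hφc : Continuous φ := hφ.continuous hα0
  have hM : Nonempty M := by
    by_contra hE
    rw [not_nonempty_iff] at hE
    have h1 : μ Set.univ = 1 := measure_univ
    rw [Set.univ_eq_empty_iff.2 hE] at h1
    simp at h1
  have x₀ : ℕ → M := fun _ => Classical.arbitrary M
  -- bounds for h
  obtain ⟨zmin, hzmin⟩ := hhc.exists_forall_le
    (by simp [Filter.cocompact_eq_bot] : Tendsto h (cocompact (ℕ → M)) atTop)
  obtain ⟨zmax, hzmax⟩ := hhc.exists_forall_ge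
    (by simp [Filter.cocompact_eq_bot] : Tendsto h (cocompact (ℕ → M)) atBot)
  set m : ℝ := h zmin with hm_def
  set Mh : ℝ := h zmax with hMh_def
  have hm0 : 0 < m := hhpos zmin
  have hMh0 : 0 < Mh := hhpos zmax
  have hmle : ∀ x, m ≤ h x := hzmin
  have hMhle : ∀ x, h x ≤ Mh := hzmax
  -- the derivative candidate
  set c : ℝ := ∫ x, φ x * h x ∂ν with hc_def
  set φt : (ℕ → M) → ℝ := fun y => φ y - c with hφt_def
  have hφtc : Continuous φt := hφc.sub continuous_const
  obtain ⟨Df', -, hDf'⟩ := exists_abs_bound hφtc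
  set Df : ℝ := Df' + 1 with hDf_def
  have hDf0 : 0 < Df := by
    have h1 := abs_nonneg (φt x₀)
    have h2 := hDf' x₀
    rw [hDf_def]
    linarith
  have hDf : ∀ y, |φt y| ≤ Df := fun y => le_trans (hDf' y) (by linarith)
  -- the normalized potential
  set g : (ℕ → M) → ℝ :=
    fun y => f y + Real.log (h y) - Real.log (h (shift y)) - Real.log lam with hg_def
  have hgc : Continuous g := by
    refine ((hfc.add (hhc.log fun x => (hhpos x).ne')).sub
      (((hhc.comp continuous_shift).log fun x => (hhpos (shift x)).ne'))).sub continuous_const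
  -- conjugation identity
  have hTconj : ∀ (ψ : (ℕ → M) → ℝ) (n : ℕ),
      (Ruelle μ g)^[n] ψ = fun x => (lam ^ n * h x)⁻¹ * (Ruelle μ f)^[n] (fun y => h y * ψ y) x := by
    intro ψ n
    have := iter_conj μ f ψ h hhpos (Real.log lam) n
    rw [Real.exp_log hlam] at this
    exact this
  -- T^[n] 1 = 1
  have hT1 : ∀ n : ℕ, (Ruelle μ g)^[n] (fun _ => (1:ℝ)) = fun _ => (1:ℝ) := by
    have h1 : Ruelle μ g (fun _ => (1:ℝ)) = fun _ => (1:ℝ) := by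
      have := hTconj (fun _ => (1:ℝ)) 1
      rw [Function.iterate_one] at this
      rw [this]
      funext x
      have e1 : (fun y => h y * (1:ℝ)) = h := by funext y; rw [mul_one]
      rw [e1, Function.iterate_one, heig]
      rw [pow_one]
      exact inv_mul_cancel₀ (ne_of_gt (mul_pos hlam (hhpos x)))
    intro n
    induction n with
    | zero => rfl
    | succ n ih => rw [Function.iterate_succ_apply, h1, ih]
  -- T^[n] of a constant
  have hTconst : ∀ (K : ℝ) (n : ℕ),
      (Ruelle μ g)^[n] (fun _ => K) = fun _ => K := by
    intro K n
    have e1 : (fun _ : ℕ → M => K) = fun y => K * (fun _ : ℕ → M => (1:ℝ)) y := by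
      funext y; rw [mul_one]
    rw [e1, iter_const_mul μ g _ K n, hT1 n]
  -- |T^[n] ψ| ≤ K if |ψ| ≤ K
  have hTabs : ∀ (ψ : (ℕ → M) → ℝ), Continuous ψ → ∀ (K : ℝ), (∀ y, |ψ y| ≤ K) →
      ∀ (n : ℕ) (x : ℕ → M), |(Ruelle μ g)^[n] ψ x| ≤ K := by
    intro ψ hψc K hK n x
    rw [abs_le]
    constructor
    · have := iter_mono μ hgc (continuous_const : Continuous fun _ : ℕ → M => -K) hψc
        (fun y => (abs_le.1 (hK y)).1) n x
      rwa [hTconst (-K) n] at this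
    · have := iter_mono μ hgc hψc (continuous_const : Continuous fun _ : ℕ → M => K)
        (fun y => (abs_le.1 (hK y)).2) n x
      rwa [hTconst K n] at this
  -- birkhoff split (prepend)
  have hbsplit : ∀ (n : ℕ) (y : ℕ → M),
      birkhoff φt (n + 1) y = φt y + birkhoff φt n (shift y) := by
    intro n y
    show (∑ k ∈ Finset.range (n+1), φt (shift^[k] y))
        = φt y + ∑ k ∈ Finset.range n, φt (shift^[k] (shift y))
    rw [Finset.sum_range_succ', add_comm]
    congr 1
  -- birkhoff split (blocks)
  have hbadd : ∀ (a b : ℕ) (y : ℕ → M),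
      birkhoff φt (a + b) y = birkhoff φt a y + birkhoff φt b (shift^[a] y) := by
    intro a b y
    show (∑ k ∈ Finset.range (a+b), φt (shift^[k] y))
        = (∑ k ∈ Finset.range a, φt (shift^[k] y)) + ∑ k ∈ Finset.range b, φt (shift^[k] (shift^[a] y))
    rw [Finset.sum_range_add]
    congr 1
    refine Finset.sum_congr rfl fun k _ => ?_
    rw [← Function.iterate_add_apply, add_comm a k]
  -- birkhoff bound
  have hbk_bound : ∀ (n : ℕ) (y : ℕ → M), |birkhoff φt n y| ≤ n * Df := by
    intro n y
    calc |birkhoff φt n y| ≤ ∑ j ∈ Finset.range n, |φt (shift^[j] y)| :=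
          Finset.abs_sum_le_sum_abs _ _
      _ ≤ (Finset.range n).card • Df :=
          Finset.sum_le_card_nsmul _ _ _ (fun j _ => hDf _)
      _ = n * Df := by rw [Finset.card_range, nsmul_eq_mul]
  -- Claim A : iterated operator with tilted potential
  have claimA : ∀ (t : ℝ) (n : ℕ) (ψ : (ℕ → M) → ℝ),
      (Ruelle μ (fun y => g y + t * φt y))^[n] ψ
        = (Ruelle μ g)^[n] (fun y => Real.exp (t * birkhoff φt n y) * ψ y) := by
    intro t n
    induction n with
    | zero =>
        intro ψ
        funext x
        show ψ x = Real.exp (t * birkhoff φt 0 x) * ψ x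
        have : birkhoff φt 0 x = 0 := by simp [birkhoff]
        rw [this, mul_zero, Real.exp_zero, one_mul]
    | succ n ih =>
        intro ψ
        rw [Function.iterate_succ_apply, ih (Ruelle μ (fun y => g y + t * φt y) ψ),
          Function.iterate_succ_apply]
        congr 1
        have e1 : Ruelle μ (fun y => g y + t * φt y) ψ
            = Ruelle μ g (fun y => Real.exp (t * φt y) * ψ y) := by
          rw [ruelle_potential μ g (fun y => g y + t * φt y) ψ]
          congr 1
          funext y
          simp only [add_sub_cancel_left]
        have e3 := ruelle_shift_mul μ g (fun y => Real.exp (t * φt y) * ψ y)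
          (fun z => Real.exp (t * birkhoff φt n z))
        have e2 : (fun y => Real.exp (t * birkhoff φt (n+1) y) * ψ y)
            = fun y => Real.exp (t * birkhoff φt n (shift y)) * (Real.exp (t * φt y) * ψ y) := by
          funext y
          rw [hbsplit n y, mul_add, Real.exp_add]
          ring
        rw [e1, e2]
        rw [show (fun y => Real.exp (t * birkhoff φt n (shift y)) * (Real.exp (t * φt y) * ψ y))
          = (fun y => (fun z => Real.exp (t * birkhoff φt n z)) (shift y)
              * ((fun z => Real.exp (t * φt z) * ψ z) y)) from rfl, e3]
  -- En notation facts
  have hEncont : ∀ (t:ℝ) (n:ℕ), Continuous fun y : ℕ → M => Real.exp (t * birkhoff φt n y) :=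
    fun t n => ((continuous_const.mul (continuous_birkhoff hφtc n)).rexp)
  have hWE : ∀ (t : ℝ) (n : ℕ),
      (Ruelle μ (fun y => g y + t * φt y))^[n] (fun _ => (1:ℝ))
        = (Ruelle μ g)^[n] (fun y => Real.exp (t * birkhoff φt n y)) := by
    intro t n
    rw [claimA t n]
    congr 1
    funext y
    simp
  have hWconj : ∀ (t : ℝ) (n : ℕ),
      (Ruelle μ (fun y => g y + t * φt y))^[n] (fun _ => (1:ℝ))
        = fun x => (Real.exp (Real.log lam + t*c) ^ n * h x)⁻¹
            * (Ruelle μ (fun y => f y + t * φ y))^[n] h x := by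
    intro t n
    have hqg : (fun y => (f y + t * φ y) + Real.log (h y) - Real.log (h (shift y))
        - (Real.log lam + t*c)) = fun y => g y + t * φt y := by
      funext y
      simp only [hg_def, hφt_def]
      ring
    have := iter_conj μ (fun y => f y + t * φ y) (fun _ => (1:ℝ)) h hhpos (Real.log lam + t*c) n
    rw [hqg] at this
    rw [this, show (fun y => h y * (1:ℝ)) = h from funext fun y => mul_one (h y)]
  -- lower bound for T^[n] En
  have hWpos : ∀ (t : ℝ) (n : ℕ) (x : ℕ → M),
      Real.exp (-(|t| * (n * Df))) ≤ (Ruelle μ g)^[n] (fun y => Real.exp (t * birkhoff φt n y)) x := by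
    intro t n x
    have hle : ∀ y, (fun _ : ℕ → M => Real.exp (-(|t| * (n * Df)))) y
        ≤ Real.exp (t * birkhoff φt n y) := by
      intro y
      apply Real.exp_le_exp.2
      have h1 : |t * birkhoff φt n y| ≤ |t| * (n * Df) := by
        rw [abs_mul]
        exact mul_le_mul_of_nonneg_left (hbk_bound n y) (abs_nonneg t)
      linarith [(abs_le.1 h1).1]
    have := iter_mono μ hgc continuous_const (hEncont t n) hle n x
    rwa [hTconst _ n] at this
  -- product formula for L_t^[n] h
  have hLprod : ∀ (t : ℝ) (n : ℕ) (x : ℕ → M),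
      (Ruelle μ (fun y => f y + t * φ y))^[n] h x
        = Real.exp (Real.log lam + t*c) ^ n * h x
          * (Ruelle μ g)^[n] (fun y => Real.exp (t * birkhoff φt n y)) x := by
    intro t n x
    have h4 : (Ruelle μ g)^[n] (fun y => Real.exp (t * birkhoff φt n y)) x
        = (Real.exp (Real.log lam + t*c) ^ n * h x)⁻¹
          * (Ruelle μ (fun y => f y + t * φ y))^[n] h x := by
      rw [← hWE t n, hWconj t n]
    rw [h4]
    have hne : Real.exp (Real.log lam + t*c) ^ n * h x ≠ 0 :=
      ne_of_gt (mul_pos (pow_pos (Real.exp_pos _) n) (hhpos x))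
    field_simp
    exact (mul_div_cancel_right₀ _ (hhpos x).ne').symm
  have hLhpos : ∀ (t : ℝ) (n : ℕ) (x : ℕ → M),
      0 < (Ruelle μ (fun y => f y + t * φ y))^[n] h x := by
    intro t n x
    rw [hLprod t n x]
    exact mul_pos (mul_pos (pow_pos (Real.exp_pos _) n) (hhpos x))
      (lt_of_lt_of_le (Real.exp_pos _) (hWpos t n x))
  -- positivity of L_t^[n] 1 and comparison with L_t^[n] h
  have hLcomp : ∀ (t : ℝ) (n : ℕ) (x : ℕ → M),
      m * (Ruelle μ (fun y => f y + t * φ y))^[n] (fun _ => (1:ℝ)) x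
        ≤ (Ruelle μ (fun y => f y + t * φ y))^[n] h x
      ∧ (Ruelle μ (fun y => f y + t * φ y))^[n] h x
        ≤ Mh * (Ruelle μ (fun y => f y + t * φ y))^[n] (fun _ => (1:ℝ)) x := by
    intro t n x
    have hptc : Continuous fun y => f y + t * φ y := hfc.add (continuous_const.mul hφc)
    constructor
    · have h1 := iter_mono μ (ψ₁ := fun y => m * (fun _ : ℕ → M => (1:ℝ)) y) hptc (continuous_const.mul continuous_const :
        Continuous fun y : ℕ → M => m * (fun _ : ℕ → M => (1:ℝ)) y) hhc
        (fun y => by simpa using hmle y) n x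
      rwa [iter_const_mul μ _ (fun _ => (1:ℝ)) m n] at h1
    · have h1 := iter_mono μ (ψ₂ := fun y => Mh * (fun _ : ℕ → M => (1:ℝ)) y) hptc hhc (continuous_const.mul continuous_const :
        Continuous fun y : ℕ → M => Mh * (fun _ : ℕ → M => (1:ℝ)) y)
        (fun y => by simpa using hMhle y) n x
      rwa [iter_const_mul μ _ (fun _ => (1:ℝ)) Mh n] at h1
  have hL1pos : ∀ (t : ℝ) (n : ℕ) (x : ℕ → M),
      0 < (Ruelle μ (fun y => f y + t * φ y))^[n] (fun _ => (1:ℝ)) x := by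
    intro t n x
    have h1 := (hLcomp t n x).2
    have h2 := hLhpos t n x
    nlinarith
  -- main limit identification
  have hVlim : ∀ t : ℝ, Tendsto (fun n : ℕ => (n:ℝ)⁻¹
      * Real.log ((Ruelle μ g)^[n] (fun y => Real.exp (t * birkhoff φt n y)) x₀))
      atTop (𝓝 (P t - Real.log lam - t * c)) := by
    intro t
    have hPt := (hP t).tendsto_at x₀
    have hone : (1 : (ℕ → M) → ℝ) = fun _ => (1:ℝ) := rfl
    rw [hone] at hPt
    set A : ℕ → ℝ := fun n => (Ruelle μ (fun y => f y + t * φ y))^[n] (fun _ => (1:ℝ)) x₀ with hA_def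
    set B : ℕ → ℝ := fun n => (Ruelle μ (fun y => f y + t * φ y))^[n] h x₀ with hB_def
    have hApos : ∀ n, 0 < A n := fun n => hL1pos t n x₀
    have hBpos : ∀ n, 0 < B n := fun n => hLhpos t n x₀
    set CB : ℝ := max |Real.log m| |Real.log Mh| with hCB_def
    have hdbound : ∀ n, |Real.log (B n) - Real.log (A n)| ≤ CB := by
      intro n
      have h1 := (hLcomp t n x₀).1
      have h2 := (hLcomp t n x₀).2
      have hub : Real.log (B n) ≤ Real.log Mh + Real.log (A n) := by
        have := Real.log_le_log (hBpos n) h2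
        rwa [Real.log_mul (ne_of_gt hMh0) (ne_of_gt (hApos n))] at this
      have hlb : Real.log m + Real.log (A n) ≤ Real.log (B n) := by
        have := Real.log_le_log (mul_pos hm0 (hApos n)) h1
        rwa [Real.log_mul (ne_of_gt hm0) (ne_of_gt (hApos n))] at this
      rw [abs_le]
      constructor
      · have := neg_abs_le (Real.log m)
        have hCB1 : -CB ≤ -|Real.log m| := neg_le_neg (le_max_left _ _)
        linarith
      · have := le_abs_self (Real.log Mh)
        have hCB2 : |Real.log Mh| ≤ CB := le_max_right _ _
        linarith
    -- seq1 → P t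
    have hseq1 : Tendsto (fun n : ℕ => (n:ℝ)⁻¹ * Real.log (B n)) atTop (𝓝 (P t)) := by
      have he : (fun n : ℕ => (n:ℝ)⁻¹ * Real.log (B n))
          = fun n : ℕ => (n:ℝ)⁻¹ * Real.log (A n) + (n:ℝ)⁻¹ * (Real.log (B n) - Real.log (A n)) := by
        funext n; ring
      rw [he]
      have h2 : Tendsto (fun n : ℕ => (n:ℝ)⁻¹ * (Real.log (B n) - Real.log (A n))) atTop (𝓝 0) := by
        apply squeeze_zero_norm (a := fun n : ℕ => CB * (n:ℝ)⁻¹)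
        · intro n
          rw [Real.norm_eq_abs, abs_mul, abs_of_nonneg (by positivity : (0:ℝ) ≤ (n:ℝ)⁻¹), mul_comm]
          exact mul_le_mul_of_nonneg_right (hdbound n) (by positivity)
        · have := tendsto_inv_atTop_nhds_zero_nat.const_mul CB
          simpa using this
      have := hPt.add h2
      simpa using this
    -- final assembly
    have hfinal : ∀ n : ℕ, 1 ≤ n → (n:ℝ)⁻¹
        * Real.log ((Ruelle μ g)^[n] (fun y => Real.exp (t * birkhoff φt n y)) x₀)
        = (n:ℝ)⁻¹ * Real.log (B n) - (Real.log lam + t*c) - (n:ℝ)⁻¹ * Real.log (h x₀) := by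
      intro n hn
      have hn0 : (n:ℝ) ≠ 0 := Nat.cast_ne_zero.2 (by omega)
      have h4 : (Ruelle μ g)^[n] (fun y => Real.exp (t * birkhoff φt n y)) x₀
          = (Real.exp (Real.log lam + t*c) ^ n * h x₀)⁻¹ * B n := by
        rw [← hWE t n, hWconj t n]
      rw [h4]
      have hne1 : (Real.exp (Real.log lam + t*c) ^ n * h x₀)⁻¹ ≠ 0 :=
        ne_of_gt (inv_pos.2 (mul_pos (pow_pos (Real.exp_pos _) n) (hhpos x₀)))
      rw [Real.log_mul hne1 (ne_of_gt (hBpos n)), Real.log_inv,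
        Real.log_mul (ne_of_gt (pow_pos (Real.exp_pos _) n)) (ne_of_gt (hhpos x₀)),
        Real.log_pow, Real.log_exp]
      field_simp
      ring
    have hlim2 : Tendsto (fun n : ℕ => (n:ℝ)⁻¹ * Real.log (B n) - (Real.log lam + t*c)
        - (n:ℝ)⁻¹ * Real.log (h x₀)) atTop (𝓝 (P t - Real.log lam - t * c)) := by
      have h5 : Tendsto (fun n : ℕ => (n:ℝ)⁻¹ * Real.log (h x₀)) atTop (𝓝 0) := by
        have := tendsto_inv_atTop_nhds_zero_nat.mul_const (Real.log (h x₀))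
        simpa using this
      have h6 := (hseq1.sub (tendsto_const_nhds (x := Real.log lam + t*c))).sub h5
      have : P t - (Real.log lam + t * c) - 0 = P t - Real.log lam - t * c := by ring
      rwa [this] at h6
    refine Tendsto.congr' ?_ hlim2
    filter_upwards [eventually_ge_atTop 1] with n hn
    exact (hfinal n hn).symm
  -- P 0 = log lam
  have hP0 : P 0 = Real.log lam := by
    have h0 : (fun y => f y + (0:ℝ) * φ y) = f := by funext y; ring
    have hPt := (hP 0).tendsto_at x₀
    rw [h0] at hPt
    have hone : (1 : (ℕ → M) → ℝ) = fun _ => (1:ℝ) := rfl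
    rw [hone] at hPt
    have hu := (hconv (fun _ => (1:ℝ)) continuous_const).tendsto_at x₀
    have hint : (∫ _ : (ℕ → M), (1:ℝ) ∂ν) = 1 := by simp
    rw [hint, mul_one] at hu
    have hupos : ∀ᶠ n : ℕ in atTop, 0 < (lam ^ n)⁻¹ * (Ruelle μ f)^[n] (fun _ => (1:ℝ)) x₀ :=
      hu.eventually (eventually_gt_nhds (hhpos x₀))
    have hlog : Tendsto (fun n : ℕ => (n:ℝ)⁻¹
        * Real.log ((lam ^ n)⁻¹ * (Ruelle μ f)^[n] (fun _ => (1:ℝ)) x₀)) atTop (𝓝 0) := by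
      have h1 : Tendsto (fun n : ℕ => Real.log ((lam ^ n)⁻¹ * (Ruelle μ f)^[n] (fun _ => (1:ℝ)) x₀))
          atTop (𝓝 (Real.log (h x₀))) := hu.log (ne_of_gt (hhpos x₀))
      have h2 := tendsto_inv_atTop_nhds_zero_nat.mul h1
      simpa using h2
    have heq : ∀ᶠ n : ℕ in atTop, (n:ℝ)⁻¹ * Real.log ((Ruelle μ f)^[n] (fun _ => (1:ℝ)) x₀)
        = Real.log lam + (n:ℝ)⁻¹
          * Real.log ((lam ^ n)⁻¹ * (Ruelle μ f)^[n] (fun _ => (1:ℝ)) x₀) := by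
      filter_upwards [hupos, eventually_ge_atTop 1] with n hpos hn
      have hn0 : (n:ℝ) ≠ 0 := Nat.cast_ne_zero.2 (by omega)
      have hL0 : (Ruelle μ f)^[n] (fun _ => (1:ℝ)) x₀
          = lam ^ n * ((lam ^ n)⁻¹ * (Ruelle μ f)^[n] (fun _ => (1:ℝ)) x₀) := by
        field_simp
      rw [hL0, Real.log_mul (by positivity) (ne_of_gt hpos), Real.log_pow]
      field_simp
    have hfinal : Tendsto (fun n : ℕ => (n:ℝ)⁻¹ * Real.log ((Ruelle μ f)^[n] (fun _ => (1:ℝ)) x₀))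
        atTop (𝓝 (Real.log lam)) := by
      have h3 : Tendsto (fun n : ℕ => Real.log lam + (n:ℝ)⁻¹
          * Real.log ((lam ^ n)⁻¹ * (Ruelle μ f)^[n] (fun _ => (1:ℝ)) x₀)) atTop
          (𝓝 (Real.log lam)) := by
        have := (tendsto_const_nhds (x := Real.log lam) (f := atTop (α := ℕ))).add hlog
        simpa using this
      exact Tendsto.congr' (by filter_upwards [heq] with n hn; exact hn.symm) h3
    exact tendsto_nhds_unique hPt hfinal
  -- integral of h * φt over ν is zero
  have hint0 : (∫ y, h y * φt y ∂ν) = 0 := by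
    obtain ⟨K1, -, hK1⟩ := exists_abs_bound (hφc.mul hhc)
    have h1 : Integrable (fun y => φ y * h y) ν :=
      (integrable_const K1).mono' (hφc.mul hhc).aestronglyMeasurable
        (Filter.Eventually.of_forall fun a => by rw [Real.norm_eq_abs]; exact hK1 a)
    obtain ⟨K2, -, hK2⟩ := exists_abs_bound hhc
    have h2 : Integrable h ν :=
      (integrable_const K2).mono' hhc.aestronglyMeasurable
        (Filter.Eventually.of_forall fun a => by rw [Real.norm_eq_abs]; exact hK2 a)
    have e1 : (fun y => h y * φt y) = fun y => φ y * h y - c * h y := by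
      funext y
      simp only [hφt_def]
      ring
    rw [e1, integral_sub h1 (h2.const_mul c), integral_const_mul, hnorm, mul_one, ← hc_def,
      sub_self]
  -- uniform smallness of T^[k] φt
  have hsmall : ∀ ε : ℝ, 0 < ε → ∃ N₀ : ℕ, ∀ k, N₀ ≤ k → ∀ x, |(Ruelle μ g)^[k] φt x| ≤ ε := by
    intro ε hε
    have hψc : Continuous fun y => h y * φt y := hhc.mul hφtc
    have hTU := hconv (fun y => h y * φt y) hψc
    rw [hint0] at hTU
    rw [Metric.tendstoUniformly_iff] at hTU
    obtain ⟨N₀, hN₀⟩ := eventually_atTop.1 (hTU (ε * m) (by positivity))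
    refine ⟨N₀, fun k hk x => ?_⟩
    have h1 := hN₀ k hk x
    rw [mul_zero, dist_comm, Real.dist_eq, sub_zero] at h1
    have h2 := hTconj φt k
    have h3 : (Ruelle μ g)^[k] φt x
        = (h x)⁻¹ * ((lam ^ k)⁻¹ * (Ruelle μ f)^[k] (fun y => h y * φt y) x) := by
      simp only [h2]
      rw [mul_inv]
      ring
    rw [h3, abs_mul, abs_of_pos (inv_pos.2 (hhpos x))]
    have h4 : (h x)⁻¹ ≤ m⁻¹ := inv_anti₀ hm0 (hmle x)
    calc (h x)⁻¹ * |(lam ^ k)⁻¹ * (Ruelle μ f)^[k] (fun y => h y * φt y) x|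
        ≤ m⁻¹ * (ε * m) := by
          refine mul_le_mul h4 (le_of_lt h1) (abs_nonneg _) (by positivity)
      _ = ε := by field_simp
  -- Birkhoff sums under T
  have hTb : ∀ n : ℕ, (Ruelle μ g)^[n] (birkhoff φt n)
      = fun x => ∑ j ∈ Finset.range n, (Ruelle μ g)^[j+1] φt x := by
    intro n
    induction n with
    | zero =>
        funext x
        show birkhoff φt 0 x = _
        simp [birkhoff]
    | succ n ih =>
        have e1 : birkhoff φt (n+1) = fun y => φt y + birkhoff φt n (shift y) := by
          funext y; exact hbsplit n y
        rw [Function.iterate_succ_apply, e1]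
        have e2 : Ruelle μ g (fun y => φt y + birkhoff φt n (shift y))
            = fun x => Ruelle μ g φt x + birkhoff φt n x := by
          have e3 : (fun y => birkhoff φt n (shift y))
              = fun y => (fun z => birkhoff φt n z) (shift y) * (fun _ : ℕ → M => (1:ℝ)) y := by
            funext y; rw [mul_one]
          have e4 : Ruelle μ g (fun y => birkhoff φt n (shift y)) = birkhoff φt n := by
            rw [e3, ruelle_shift_mul μ g (fun _ => (1:ℝ)) (birkhoff φt n)]
            have h5 : Ruelle μ g (fun _ => (1:ℝ)) = fun _ => (1:ℝ) := by
              have := hT1 1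
              rwa [Function.iterate_one] at this
            funext x
            rw [h5, mul_one]
          rw [ruelle_add μ (χ := fun y => birkhoff φt n (shift y)) hgc hφtc
            (by exact (continuous_birkhoff hφtc n).comp continuous_shift), e4]
        rw [e2]
        have e5 : (fun x => Ruelle μ g φt x + birkhoff φt n x)
            = fun y => (Ruelle μ g φt) y + (birkhoff φt n) y := rfl
        rw [e5, iter_add μ hgc (ruelle_cont μ hgc hφtc) (continuous_birkhoff hφtc n), ih]
        funext x
        simp only [Finset.sum_range_succ]
        rw [← Function.iterate_succ_apply]
        ring
  -- eventual bound for T^[n] (birkhoff φt n)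
  have hTbsmall : ∀ ε : ℝ, 0 < ε → ∀ᶠ n : ℕ in atTop, ∀ x,
      |(Ruelle μ g)^[n] (birkhoff φt n) x| ≤ n * ε := by
    intro ε hε
    obtain ⟨N₀, hN₀⟩ := hsmall (ε/2) (by positivity)
    obtain ⟨n₁, hn₁⟩ := exists_nat_ge ((N₀ * Df) / (ε/2))
    rw [eventually_atTop]
    refine ⟨max N₀ n₁, fun n hn x => ?_⟩
    have hnN₀ : N₀ ≤ n := le_trans (le_max_left _ _) hn
    have hnn₁ : n₁ ≤ n := le_trans (le_max_right _ _) hn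
    simp only [hTb n]
    have hsplitsum : ∑ j ∈ Finset.range n, (Ruelle μ g)^[j+1] φt x
        = ∑ j ∈ Finset.Ico 0 N₀, (Ruelle μ g)^[j+1] φt x
          + ∑ j ∈ Finset.Ico N₀ n, (Ruelle μ g)^[j+1] φt x := by
      rw [Finset.sum_Ico_consecutive _ (Nat.zero_le N₀) hnN₀, ← Finset.range_eq_Ico]
    rw [hsplitsum]
    have hb1 : |∑ j ∈ Finset.Ico 0 N₀, (Ruelle μ g)^[j+1] φt x| ≤ N₀ * Df := by
      calc |∑ j ∈ Finset.Ico 0 N₀, (Ruelle μ g)^[j+1] φt x|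
          ≤ ∑ j ∈ Finset.Ico 0 N₀, |(Ruelle μ g)^[j+1] φt x| := Finset.abs_sum_le_sum_abs _ _
        _ ≤ (Finset.Ico 0 N₀).card • Df :=
            Finset.sum_le_card_nsmul _ _ _ (fun j _ => hTabs φt hφtc Df hDf (j+1) x)
        _ = N₀ * Df := by rw [Nat.card_Ico, Nat.sub_zero, nsmul_eq_mul]
    have hb2 : |∑ j ∈ Finset.Ico N₀ n, (Ruelle μ g)^[j+1] φt x| ≤ n * (ε/2) := by
      calc |∑ j ∈ Finset.Ico N₀ n, (Ruelle μ g)^[j+1] φt x|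
          ≤ ∑ j ∈ Finset.Ico N₀ n, |(Ruelle μ g)^[j+1] φt x| := Finset.abs_sum_le_sum_abs _ _
        _ ≤ (Finset.Ico N₀ n).card • (ε/2) := by
            refine Finset.sum_le_card_nsmul _ _ _ (fun j hj => ?_)
            refine hN₀ (j+1) ?_ x
            have := (Finset.mem_Ico.1 hj).1
            omega
        _ = ((n - N₀ : ℕ) : ℝ) * (ε/2) := by rw [Nat.card_Ico, nsmul_eq_mul]
        _ ≤ n * (ε/2) := by
            refine mul_le_mul_of_nonneg_right ?_ (by positivity)
            exact_mod_cast Nat.cast_le.2 (Nat.sub_le n N₀)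
    have hb3 : (N₀ : ℝ) * Df ≤ n * (ε/2) := by
      have h1 : ((N₀ : ℝ) * Df) / (ε/2) ≤ (n₁ : ℝ) := hn₁
      have h2 : (n₁ : ℝ) ≤ n := Nat.cast_le.2 hnn₁
      rw [div_le_iff₀ (by positivity)] at h1
      calc (N₀ : ℝ) * Df ≤ (n₁ : ℝ) * (ε/2) := h1
        _ ≤ n * (ε/2) := mul_le_mul_of_nonneg_right h2 (by positivity)
    calc |∑ j ∈ Finset.Ico 0 N₀, (Ruelle μ g)^[j+1] φt x
          + ∑ j ∈ Finset.Ico N₀ n, (Ruelle μ g)^[j+1] φt x|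
        ≤ |∑ j ∈ Finset.Ico 0 N₀, (Ruelle μ g)^[j+1] φt x|
          + |∑ j ∈ Finset.Ico N₀ n, (Ruelle μ g)^[j+1] φt x| := abs_add_le _ _
      _ ≤ N₀ * Df + n * (ε/2) := add_le_add hb1 hb2
      _ ≤ n * (ε/2) + n * (ε/2) := by linarith
      _ = n * ε := by ring
  -- upper bound for the pressure difference
  have hupper : ∀ ε : ℝ, 0 < ε → ∃ K : ℝ, 0 < K ∧ ∀ t : ℝ, |t| ≤ 1 →
      P t - Real.log lam - t * c ≤ |t| * ε + t^2 * K := by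
    intro ε hε
    obtain ⟨N, hNb, hN1⟩ := (((hTbsmall ε hε).and (eventually_ge_atTop 1)).exists)
    have hNpos : (0:ℝ) < (N:ℝ) := by exact_mod_cast Nat.lt_of_lt_of_le Nat.zero_lt_one hN1
    refine ⟨(N:ℝ) * Df^2 * Real.exp ((N:ℝ) * Df), by positivity, fun t ht => ?_⟩
    set γ : ℝ := 1 + |t| * ((N:ℝ) * ε) + t^2 * ((N:ℝ) * Df)^2 * Real.exp ((N:ℝ) * Df) with hγ_def
    have hγ1 : 1 ≤ γ := by
      have h1 : 0 ≤ |t| * ((N:ℝ) * ε) := by positivity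
      have h2 : 0 ≤ t^2 * ((N:ℝ) * Df)^2 * Real.exp ((N:ℝ) * Df) := by positivity
      rw [hγ_def]; linarith
    have hγpos : (0:ℝ) < γ := lt_of_lt_of_le one_pos hγ1
    -- pointwise upper bound for T^[N] E_N
    have hGb : ∀ x, (Ruelle μ g)^[N] (fun y => Real.exp (t * birkhoff φt N y)) x ≤ γ := by
      intro x
      have hptle : ∀ y, Real.exp (t * birkhoff φt N y)
          ≤ (1 + t^2 * ((N:ℝ) * Df)^2 * Real.exp ((N:ℝ) * Df)) + t * birkhoff φt N y := by
        intro y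
        have hub : |t * birkhoff φt N y| ≤ (N:ℝ) * Df := by
          rw [abs_mul]
          calc |t| * |birkhoff φt N y| ≤ 1 * ((N:ℝ) * Df) :=
              mul_le_mul ht (hbk_bound N y) (abs_nonneg _) zero_le_one
            _ = (N:ℝ) * Df := one_mul _
        have h1 := exp_upper hub
        have h2 : (t * birkhoff φt N y)^2 ≤ t^2 * ((N:ℝ)*Df)^2 := by
          rw [mul_pow]
          refine mul_le_mul_of_nonneg_left ?_ (sq_nonneg t)
          have h3 := abs_le.1 (hbk_bound N y)
          nlinarith [h3.1, h3.2]
        nlinarith [Real.exp_pos ((N:ℝ) * Df)]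
      have hcont2 : Continuous fun y : ℕ → M =>
          (1 + t^2 * ((N:ℝ) * Df)^2 * Real.exp ((N:ℝ) * Df)) + t * birkhoff φt N y :=
        continuous_const.add (continuous_const.mul (continuous_birkhoff hφtc N))
      have h3 := iter_mono μ hgc (hEncont t N) hcont2 hptle N x
      have h4 : (Ruelle μ g)^[N]
          (fun y => (1 + t^2 * ((N:ℝ) * Df)^2 * Real.exp ((N:ℝ) * Df)) + t * birkhoff φt N y)
          = fun x => (1 + t^2 * ((N:ℝ) * Df)^2 * Real.exp ((N:ℝ) * Df))
              + t * (Ruelle μ g)^[N] (birkhoff φt N) x := by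
        have e1 : (fun y : ℕ → M =>
            (1 + t^2 * ((N:ℝ) * Df)^2 * Real.exp ((N:ℝ) * Df)) + t * birkhoff φt N y)
            = fun y => (fun _ : ℕ → M =>
                1 + t^2 * ((N:ℝ) * Df)^2 * Real.exp ((N:ℝ) * Df)) y
                + (fun z => t * birkhoff φt N z) y := rfl
        rw [e1, iter_add μ (χ := fun z => t * birkhoff φt N z) hgc continuous_const
          (continuous_const.mul (continuous_birkhoff hφtc N)),
          hTconst _ N, iter_const_mul μ g (birkhoff φt N) t N]
      simp only [h4] at h3
      have h5 : t * (Ruelle μ g)^[N] (birkhoff φt N) x ≤ |t| * ((N:ℝ) * ε) := by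
        calc t * (Ruelle μ g)^[N] (birkhoff φt N) x
            ≤ |t * (Ruelle μ g)^[N] (birkhoff φt N) x| := le_abs_self _
          _ = |t| * |(Ruelle μ g)^[N] (birkhoff φt N) x| := abs_mul _ _
          _ ≤ |t| * ((N:ℝ) * ε) := mul_le_mul_of_nonneg_left (hNb x) (abs_nonneg t)
      rw [hγ_def]
      linarith
    -- recursion along multiples of N
    have hrec : ∀ k : ℕ, ∀ x,
        (Ruelle μ g)^[k*N] (fun y => Real.exp (t * birkhoff φt (k*N) y)) x ≤ γ^k := by
      intro k
      induction k with
      | zero =>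
          intro x
          show (Ruelle μ g)^[0*N] (fun y => Real.exp (t * birkhoff φt (0*N) y)) x ≤ 1
          rw [Nat.zero_mul]
          show Real.exp (t * birkhoff φt 0 x) ≤ 1
          simp [birkhoff]
      | succ k ih =>
          intro x
          have hmul : (k+1)*N = k*N + N := Nat.succ_mul k N
          rw [hmul, Function.iterate_add_apply]
          have esplit : (fun y => Real.exp (t * birkhoff φt (k*N + N) y))
              = fun y => (fun z => Real.exp (t * birkhoff φt (k*N) z)) (shift^[N] y)
                  * ((fun z => Real.exp (t * birkhoff φt N z)) y) := by
            funext y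
            show Real.exp (t * birkhoff φt (k*N + N) y)
              = Real.exp (t * birkhoff φt (k*N) (shift^[N] y)) * Real.exp (t * birkhoff φt N y)
            rw [show k*N + N = N + k*N from Nat.add_comm _ _, hbadd N (k*N) y, mul_add,
              Real.exp_add]
            ring
          rw [esplit, iter_shift_mul μ g (fun z => Real.exp (t * birkhoff φt N z))
            (fun z => Real.exp (t * birkhoff φt (k*N) z)) N]
          have hb : ∀ y, (fun x => Real.exp (t * birkhoff φt (k*N) x)
              * (Ruelle μ g)^[N] (fun z => Real.exp (t * birkhoff φt N z)) x) y
              ≤ (fun x => γ * Real.exp (t * birkhoff φt (k*N) x)) y := by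
            intro y
            show Real.exp (t * birkhoff φt (k*N) y)
                * (Ruelle μ g)^[N] (fun z => Real.exp (t * birkhoff φt N z)) y
              ≤ γ * Real.exp (t * birkhoff φt (k*N) y)
            have h1 := hGb y
            nlinarith [Real.exp_pos (t * birkhoff φt (k*N) y)]
          have hcont1 : Continuous fun x : ℕ → M => Real.exp (t * birkhoff φt (k*N) x)
              * (Ruelle μ g)^[N] (fun z => Real.exp (t * birkhoff φt N z)) x :=
            (hEncont t (k*N)).mul (iter_cont μ hgc (hEncont t N) N)
          have hcont2 : Continuous fun x : ℕ → M => γ * Real.exp (t * birkhoff φt (k*N) x) :=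
            continuous_const.mul (hEncont t (k*N))
          have h6 := iter_mono μ hgc hcont1 hcont2 hb (k*N) x
          rw [iter_const_mul μ g (fun z => Real.exp (t * birkhoff φt (k*N) z)) γ (k*N)] at h6
          calc (Ruelle μ g)^[k*N] (fun x => Real.exp (t * birkhoff φt (k*N) x)
              * (Ruelle μ g)^[N] (fun z => Real.exp (t * birkhoff φt N z)) x) x
              ≤ γ * (Ruelle μ g)^[k*N] (fun z => Real.exp (t * birkhoff φt (k*N) z)) x := h6
            _ ≤ γ * γ^k := mul_le_mul_of_nonneg_left (ih x) (le_of_lt hγpos)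
            _ = γ^(k+1) := by rw [pow_succ]; ring
    -- pass to the limit along the subsequence k*N
    have hNn : Tendsto (fun k : ℕ => k * N) atTop atTop := by
      refine tendsto_atTop_atTop.2 fun b => ⟨b, fun k hk => ?_⟩
      calc b ≤ k := hk
        _ ≤ k * N := Nat.le_mul_of_pos_right k (by omega)
    have hsub := (hVlim t).comp hNn
    have hbound : ∀ᶠ k : ℕ in atTop, ((fun n : ℕ => (n:ℝ)⁻¹
        * Real.log ((Ruelle μ g)^[n] (fun y => Real.exp (t * birkhoff φt n y)) x₀))
          ∘ fun k => k * N) k ≤ Real.log γ / (N:ℝ) := by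
      filter_upwards [eventually_ge_atTop 1] with k hk
      have hk0 : (0:ℝ) < (k:ℝ) := by exact_mod_cast Nat.lt_of_lt_of_le Nat.zero_lt_one hk
      show ((k*N : ℕ):ℝ)⁻¹ * Real.log
          ((Ruelle μ g)^[k*N] (fun y => Real.exp (t * birkhoff φt (k*N) y)) x₀)
        ≤ Real.log γ / (N:ℝ)
      have hVp : 0 < (Ruelle μ g)^[k*N] (fun y => Real.exp (t * birkhoff φt (k*N) y)) x₀ :=
        lt_of_lt_of_le (Real.exp_pos _) (hWpos t (k*N) x₀)
      have hlog1 : Real.log ((Ruelle μ g)^[k*N]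
          (fun y => Real.exp (t * birkhoff φt (k*N) y)) x₀) ≤ (k:ℝ) * Real.log γ := by
        calc Real.log ((Ruelle μ g)^[k*N] (fun y => Real.exp (t * birkhoff φt (k*N) y)) x₀)
            ≤ Real.log (γ^k) := Real.log_le_log hVp (hrec k x₀)
          _ = (k:ℝ) * Real.log γ := Real.log_pow γ k
      calc ((k*N : ℕ):ℝ)⁻¹ * Real.log
            ((Ruelle μ g)^[k*N] (fun y => Real.exp (t * birkhoff φt (k*N) y)) x₀)
          ≤ ((k*N : ℕ):ℝ)⁻¹ * ((k:ℝ) * Real.log γ) := by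
            refine mul_le_mul_of_nonneg_left hlog1 ?_
            positivity
        _ = Real.log γ / (N:ℝ) := by
            push_cast
            field_simp
    have hQle : P t - Real.log lam - t * c ≤ Real.log γ / (N:ℝ) := le_of_tendsto hsub hbound
    have hlog2 : Real.log γ ≤ |t| * ((N:ℝ)*ε) + t^2 * ((N:ℝ)*Df)^2 * Real.exp ((N:ℝ)*Df) := by
      have h1 := Real.log_le_sub_one_of_pos hγpos
      have h2 : γ - 1 = |t| * ((N:ℝ)*ε) + t^2 * ((N:ℝ)*Df)^2 * Real.exp ((N:ℝ)*Df) := by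
        rw [hγ_def]; ring
      linarith
    have hfin : Real.log γ / (N:ℝ) ≤ |t| * ε + t^2 * ((N:ℝ) * Df^2 * Real.exp ((N:ℝ)*Df)) := by
      rw [div_le_iff₀ hNpos]
      calc Real.log γ ≤ |t| * ((N:ℝ)*ε) + t^2 * ((N:ℝ)*Df)^2 * Real.exp ((N:ℝ)*Df) := hlog2
        _ = (|t| * ε + t^2 * ((N:ℝ) * Df^2 * Real.exp ((N:ℝ)*Df))) * (N:ℝ) := by ring
    exact le_trans hQle hfin
  -- lower bound for the pressure difference
  have hlower : ∀ t : ℝ, 0 ≤ P t - Real.log lam - t * c := by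
    intro t
    have key : ∀ ε : ℝ, 0 < ε → -(|t| * ε) ≤ P t - Real.log lam - t * c := by
      intro ε hε
      refine ge_of_tendsto (hVlim t) ?_
      filter_upwards [hTbsmall ε hε, eventually_ge_atTop 1] with n hb hn
      have hn0 : (0:ℝ) < (n:ℝ) := by exact_mod_cast Nat.lt_of_lt_of_le Nat.zero_lt_one hn
      set s : ℝ := t * (Ruelle μ g)^[n] (birkhoff φt n) x₀ with hs_def
      have hpt : ∀ y, (fun z => Real.exp s * ((1 - s) + t * birkhoff φt n z)) y
          ≤ Real.exp (t * birkhoff φt n y) := by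
        intro y
        have h1 := Real.add_one_le_exp (t * birkhoff φt n y - s)
        have h2 : Real.exp s * Real.exp (t * birkhoff φt n y - s)
            = Real.exp (t * birkhoff φt n y) := by
          rw [← Real.exp_add]; congr 1; ring
        have h3 := mul_le_mul_of_nonneg_left h1 (le_of_lt (Real.exp_pos s))
        calc (fun z => Real.exp s * ((1 - s) + t * birkhoff φt n z)) y
            = Real.exp s * ((t * birkhoff φt n y - s) + 1) := by
              show Real.exp s * ((1 - s) + t * birkhoff φt n y) = _
              ring
          _ ≤ Real.exp s * Real.exp (t * birkhoff φt n y - s) := h3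
          _ = Real.exp (t * birkhoff φt n y) := h2
      have h4 := iter_mono μ (ψ₁ := fun z => Real.exp s * ((1 - s) + t * birkhoff φt n z)) hgc
        (continuous_const.mul (continuous_const.add
          (continuous_const.mul (continuous_birkhoff hφtc n))))
        (hEncont t n) hpt n x₀
      have h5 : (Ruelle μ g)^[n] (fun z => Real.exp s * ((1 - s) + t * birkhoff φt n z))
          = fun x => Real.exp s * ((1 - s) + t * (Ruelle μ g)^[n] (birkhoff φt n) x) := by
        have e0 : (fun z => Real.exp s * ((1 - s) + t * birkhoff φt n z))
            = fun z => Real.exp s * ((fun w => (1 - s) + t * birkhoff φt n w) z) := rfl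
        rw [e0, iter_const_mul μ g (fun w => (1 - s) + t * birkhoff φt n w) (Real.exp s) n]
        have e1 : (fun w : ℕ → M => (1 - s) + t * birkhoff φt n w)
            = fun w => (fun _ : ℕ → M => (1 - s)) w + (fun z => t * birkhoff φt n z) w := rfl
        rw [e1, iter_add μ (χ := fun z => t * birkhoff φt n z) hgc continuous_const
          (continuous_const.mul (continuous_birkhoff hφtc n)),
          hTconst (1-s) n, iter_const_mul μ g (birkhoff φt n) t n]
      simp only [h5] at h4
      have h6 : Real.exp s
          ≤ (Ruelle μ g)^[n] (fun y => Real.exp (t * birkhoff φt n y)) x₀ := by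
        have e2 : Real.exp s * ((1 - s) + t * (Ruelle μ g)^[n] (birkhoff φt n) x₀)
            = Real.exp s := by
          rw [← hs_def]
          ring
        rw [e2] at h4
        exact h4
      have h7 : s ≤ Real.log ((Ruelle μ g)^[n]
          (fun y => Real.exp (t * birkhoff φt n y)) x₀) := by
        have := Real.log_le_log (Real.exp_pos s) h6
        rwa [Real.log_exp] at this
      have h8 : |s| ≤ |t| * ((n:ℝ) * ε) := by
        rw [hs_def, abs_mul]
        exact mul_le_mul_of_nonneg_left (hb x₀) (abs_nonneg t)
      have h9 : (n:ℝ)⁻¹ * s ≤ (n:ℝ)⁻¹ * Real.log ((Ruelle μ g)^[n]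
          (fun y => Real.exp (t * birkhoff φt n y)) x₀) :=
        mul_le_mul_of_nonneg_left h7 (by positivity)
      have h10 : -(|t| * ε) ≤ (n:ℝ)⁻¹ * s := by
        have h11 := (abs_le.1 h8).1
        calc -(|t| * ε) = (n:ℝ)⁻¹ * (-(|t| * ((n:ℝ) * ε))) := by
              field_simp
          _ ≤ (n:ℝ)⁻¹ * s := mul_le_mul_of_nonneg_left h11 (by positivity)
      linarith
    by_contra hneg
    push_neg at hneg
    rcases eq_or_ne t 0 with rfl | ht0
    · have h1 := key 1 one_pos
      simp only [abs_zero, zero_mul, neg_zero] at h1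
      linarith
    · have habs : 0 < |t| := abs_pos.2 ht0
      have hnum : 0 < -(P t - Real.log lam - t * c) := by linarith
      have h1 := key ((-(P t - Real.log lam - t * c))/(2*|t|)) (by positivity)
      have heq : -(|t| * ((-(P t - Real.log lam - t * c))/(2*|t|)))
          = (P t - Real.log lam - t * c)/2 := by
        field_simp
      rw [heq] at h1
      linarith
  -- conclusion
  rw [hasDerivAt_iff_isLittleO, Asymptotics.isLittleO_iff]
  intro C hC
  obtain ⟨K, hK, hup⟩ := hupper (C/2) (by positivity)
  rw [Metric.eventually_nhds_iff]
  refine ⟨min 1 (C/(2*K)), lt_min one_pos (by positivity), fun y hy => ?_⟩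
  rw [Real.dist_eq, sub_zero] at hy
  have hy1 : |y| ≤ 1 := le_of_lt (lt_of_lt_of_le hy (min_le_left _ _))
  have hy2 : |y| ≤ C/(2*K) := le_of_lt (lt_of_lt_of_le hy (min_le_right _ _))
  have hQub := hup y hy1
  have hQlb := hlower y
  simp only [sub_zero, smul_eq_mul, Real.norm_eq_abs]
  rw [hP0]
  rw [abs_of_nonneg hQlb]
  have hsq : y^2 * K ≤ |y| * (C/2) := by
    have h1 : y^2 = |y| * |y| := by rw [sq, ← abs_mul_abs_self y]
    rw [h1]
    calc |y| * |y| * K ≤ |y| * (C/(2*K)) * K := by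
          refine mul_le_mul_of_nonneg_right ?_ (le_of_lt hK)
          exact mul_le_mul_of_nonneg_left hy2 (abs_nonneg y)
      _ = |y| * (C/2) := by field_simp
  calc P y - Real.log lam - y * c ≤ |y| * (C/2) + y^2 * K := hQub
    _ ≤ |y| * (C/2) + |y| * (C/2) := by linarith
    _ = C * |y| := by ring
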